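/- Let y₋, y₊ > 0 and d ∈ (−1, 1) be real numbers, and define F(X) = ((1+d)/2)·(X + y₋)³·((X − (3/2)y₊)² + (3/4)y₊² + 1) + ((1−d)/2)·(X − y₊)³·((X + (3/2)y₋)² + (3/4)y₋² + 1). Then the unique real root z of F is a simple root, i.e. F'(z) ≠ 0. -/

import Mathlib

/-- The unique real root of the quintic `F` is simple: `F'(z) ≠ 0` at any real root `z`. -/
theorem stmt_1 (ym yp d : ℝ) (hym : 0 < ym) (hyp : 0 < yp)
    (hd₁ : -1 < d) (hd₂ : d < 1) (F : ℝ → ℝ)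
    (hF : F = fun z : ℝ =>
      ((1 + d) / 2) * (z + ym) ^ 3 * ((z - (3 / 2) * yp) ^ 2 + (3 / 4) * yp ^ 2 + 1) +
        ((1 - d) / 2) * (z - yp) ^ 3 * ((z + (3 / 2) * ym) ^ 2 + (3 / 4) * ym ^ 2 + 1))
    (z : ℝ) (hz : F z = 0) :
    deriv F z ≠ 0 := by
  subst hF
  simp only at hz
  set c1 : ℝ := (1 + d) / 2 with hc1
  set c2 : ℝ := (1 - d) / 2 with hc2
  have hc1p : 0 < c1 := by rw [hc1]; linarith
  have hc2p : 0 < c2 := by rw [hc2]; linarith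
  set g : ℝ := (z - 3 / 2 * yp) ^ 2 + 3 / 4 * yp ^ 2 + 1 with hg
  set h : ℝ := (z + 3 / 2 * ym) ^ 2 + 3 / 4 * ym ^ 2 + 1 with hh
  have hgp : 0 < g := by rw [hg]; positivity
  have hhp : 0 < h := by rw [hh]; positivity
  -- root location: -ym < z < yp
  have ha : 0 < z + ym := by
    by_contra hcon
    push_neg at hcon
    have h1 : z - yp < 0 := by linarith
    have h2 : (z - yp) ^ 3 < 0 := Odd.pow_neg (by decide) h1
    have h3 : (z + ym) ^ 3 ≤ 0 := Odd.pow_nonpos (by decide) hcon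
    have t1 : c1 * (z + ym) ^ 3 * g ≤ 0 :=
      mul_nonpos_of_nonpos_of_nonneg
        (mul_nonpos_of_nonneg_of_nonpos hc1p.le h3) hgp.le
    have t2 : c2 * (z - yp) ^ 3 * h < 0 :=
      mul_neg_of_neg_of_pos (mul_neg_of_pos_of_neg hc2p h2) hhp
    linarith
  have hb : 0 < yp - z := by
    by_contra hcon
    push_neg at hcon
    have h1 : 0 < z + ym := by linarith
    have h2 : 0 ≤ (z - yp) ^ 3 := pow_nonneg (by linarith) 3
    have t1 : 0 < c1 * (z + ym) ^ 3 * g := by positivity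
    have t2 : 0 ≤ c2 * (z - yp) ^ 3 * h :=
      mul_nonneg (mul_nonneg hc2p.le h2) hhp.le
    linarith
  -- derivative
  have H1 : HasDerivAt (fun x : ℝ => (x + ym) ^ 3) (3 * (z + ym) ^ 2) z := by
    simpa using ((hasDerivAt_id z).add_const ym).fun_pow 3
  have H2 : HasDerivAt (fun x : ℝ => (x - (3 / 2) * yp) ^ 2 + (3 / 4) * yp ^ 2 + 1)
      (2 * (z - (3 / 2) * yp)) z := by
    simpa using ((((hasDerivAt_id z).sub_const ((3 / 2) * yp)).pow 2).add_const
      ((3 / 4) * yp ^ 2)).add_const 1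
  have H3 : HasDerivAt (fun x : ℝ => (x - yp) ^ 3) (3 * (z - yp) ^ 2) z := by
    simpa using ((hasDerivAt_id z).sub_const yp).fun_pow 3
  have H4 : HasDerivAt (fun x : ℝ => (x + (3 / 2) * ym) ^ 2 + (3 / 4) * ym ^ 2 + 1)
      (2 * (z + (3 / 2) * ym)) z := by
    simpa using ((((hasDerivAt_id z).add_const ((3 / 2) * ym)).pow 2).add_const
      ((3 / 4) * ym ^ 2)).add_const 1
  have HD : HasDerivAt (fun x : ℝ =>
      c1 * (x + ym) ^ 3 * ((x - (3 / 2) * yp) ^ 2 + (3 / 4) * yp ^ 2 + 1) +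
        c2 * (x - yp) ^ 3 * ((x + (3 / 2) * ym) ^ 2 + (3 / 4) * ym ^ 2 + 1))
      ((c1 * (3 * (z + ym) ^ 2) * g + c1 * (z + ym) ^ 3 * (2 * (z - 3 / 2 * yp))) +
       (c2 * (3 * (z - yp) ^ 2) * h + c2 * (z - yp) ^ 3 * (2 * (z + 3 / 2 * ym)))) z := by
    exact ((H1.const_mul c1).mul H2).add ((H3.const_mul c2).mul H4)
  rw [HD.deriv]
  -- root equation with positive cube on the right
  have hE : c1 * (z + ym) ^ 3 * g = c2 * (yp - z) ^ 3 * h := by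
    linear_combination hz
  -- the two bracket quantities are positive
  have q1 : 0 < 3 * g - 2 * (yp - z + yp / 2) * (yp - z) := by
    have hgeq : g = (yp - z + yp / 2) ^ 2 + 3 / 4 * yp ^ 2 + 1 := by rw [hg]; ring
    nlinarith [mul_pos hb hyp, sq_nonneg (yp - z + yp / 2)]
  have q2 : 0 < 3 * h - 2 * (z + ym + ym / 2) * (z + ym) := by
    have hheq : h = (z + ym + ym / 2) ^ 2 + 3 / 4 * ym ^ 2 + 1 := by rw [hh]; ring
    nlinarith [mul_pos ha hym, sq_nonneg (z + ym + ym / 2)]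
  -- key identity
  have key : ((c1 * (3 * (z + ym) ^ 2) * g + c1 * (z + ym) ^ 3 * (2 * (z - 3 / 2 * yp))) +
       (c2 * (3 * (z - yp) ^ 2) * h + c2 * (z - yp) ^ 3 * (2 * (z + 3 / 2 * ym)))) *
      ((z + ym) * (yp - z) * g * h) =
      (c1 * (z + ym) ^ 3 * g) *
        ((yp - z) * g * (3 * h - 2 * (z + ym + ym / 2) * (z + ym))) +
      (c2 * (yp - z) ^ 3 * h) *
        ((z + ym) * h * (3 * g - 2 * (yp - z + yp / 2) * (yp - z))) := by
    linear_combination (2 * (z + ym) * (yp - z) *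
      ((z + ym + ym / 2) * g - (yp - z + yp / 2) * h)) * hE
  have hK1 : 0 < c1 * (z + ym) ^ 3 * g := by positivity
  have hK2 : 0 < c2 * (yp - z) ^ 3 * h := by positivity
  have t1 : 0 < (yp - z) * g * (3 * h - 2 * (z + ym + ym / 2) * (z + ym)) :=
    mul_pos (mul_pos hb hgp) q2
  have t2 : 0 < (z + ym) * h * (3 * g - 2 * (yp - z + yp / 2) * (yp - z)) :=
    mul_pos (mul_pos ha hhp) q1
  have hrhs : 0 < ((c1 * (3 * (z + ym) ^ 2) * g + c1 * (z + ym) ^ 3 * (2 * (z - 3 / 2 * yp))) +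
       (c2 * (3 * (z - yp) ^ 2) * h + c2 * (z - yp) ^ 3 * (2 * (z + 3 / 2 * ym)))) *
      ((z + ym) * (yp - z) * g * h) := by
    rw [key]
    exact add_pos (mul_pos hK1 t1) (mul_pos hK2 t2)
  have hP : 0 < (z + ym) * (yp - z) * g * h := by positivity
  intro h0
  rw [h0, zero_mul] at hrhs
  exact lt_irrefl 0 hrhs
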